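/- Let (B,⌊·,·⌋) be an SSD space, f ∈ PC(B) and f ≥ q on B. Then f^@ = q on P_q(f), i.e. for every a ∈ B with f(a) = q(a) one has f^@(a) = q(a). -/
import Mathlib


noncomputable section

variable {B : Type*} [AddCommGroup B] [Module ℝ B]

/-- The quadratic form `q(b) = ½⌊b,b⌋` associated with a bilinear form. -/
def qForm (br : B →ₗ[ℝ] B →ₗ[ℝ] ℝ) (b : B) : ℝ := (1 / 2) * br b b

/-- The intrinsic conjugate `f^@(c) = sup_{b} (⌊b,c⌋ - f(b))`. -/
def intrinsicConj (br : B →ₗ[ℝ] B →ₗ[ℝ] ℝ) (f : B → EReal) (c : B) : EReal :=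
  ⨆ b : B, ((br b c : ℝ) : EReal) - f b

/-- A proper function from `B` into `(-∞,∞]`: never `⊥` and somewhere finite. -/
def ProperFn (f : B → EReal) : Prop := (∀ b, f b ≠ ⊥) ∧ ∃ b, f b ≠ ⊤

/-- Convexity for `(-∞,∞]`-valued functions. -/
def ConvexFn (f : B → EReal) : Prop :=
  ∀ b c : B, ∀ t : ℝ, 0 ≤ t → t ≤ 1 →
    f (t • b + (1 - t) • c) ≤ (t : EReal) * f b + ((1 - t : ℝ) : EReal) * f c

/-- if `f ∈ PC(B)` and `f ≥ q` on `B`, then `f^@ = q` on `P_q(f)`. -/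
theorem stmt0 [Nontrivial B] (br : B →ₗ[ℝ] B →ₗ[ℝ] ℝ)
    (hsymm : ∀ b c : B, br b c = br c b)
    (f : B → EReal) (hproper : ProperFn f) (hconv : ConvexFn f)
    (hfq : ∀ b : B, ((qForm br b : ℝ) : EReal) ≤ f b)
    (a : B) (ha : f a = ((qForm br a : ℝ) : EReal)) :
    intrinsicConj br f a = ((qForm br a : ℝ) : EReal) := by
  have hne : ∀ b, f b ≠ ⊥ := hproper.1
  apply le_antisymm
  · -- upper bound
    refine iSup_le fun b => ?_
    rcases eq_or_ne (f b) ⊤ with hb | hb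
    · simp [hb]
    · set r : ℝ := (f b).toReal with hrdef
      have hr : ((r : ℝ) : EReal) = f b := EReal.coe_toReal hb (hne b)
      -- key real inequality
      have key : br b a - qForm br a ≤ r := by
        apply le_of_forall_pos_le_add
        intro ε hε
        set C : ℝ := (1/2) * br b b - br b a + (1/2) * br a a with hCdef
        set t : ℝ := min 1 (ε / (|C| + 1)) with htdef
        have habs : (0:ℝ) < |C| + 1 := by positivity
        have ht0 : 0 < t := lt_min one_pos (by positivity)
        have ht1 : t ≤ 1 := min_le_left _ _
        have hc := hconv b a t ht0.le ht1
        have hrhs : (t : EReal) * f b + ((1 - t : ℝ) : EReal) * f a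
            = ((t * r + (1 - t) * qForm br a : ℝ) : EReal) := by
          rw [← hr, ha]
          norm_cast
        have hle : ((qForm br (t • b + (1 - t) • a) : ℝ) : EReal)
            ≤ ((t * r + (1 - t) * qForm br a : ℝ) : EReal) :=
          (hfq _).trans (hc.trans_eq hrhs)
        have hreal : qForm br (t • b + (1 - t) • a) ≤ t * r + (1 - t) * qForm br a :=
          EReal.coe_le_coe_iff.mp hle
        have hexp : qForm br (t • b + (1 - t) • a)
            = (1/2) * (t * t * br b b + 2 * t * (1 - t) * br b a
                + (1 - t) * (1 - t) * br a a) := by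
          simp only [qForm, map_add, map_smul, LinearMap.add_apply, LinearMap.smul_apply,
            smul_eq_mul, hsymm a b]
          ring
        rw [hexp] at hreal
        have h2' : t * (br b a - (1/2) * br a a + t * C) ≤ t * r := by
          simp only [qForm] at hreal ⊢
          nlinarith [hreal]
        have h2 : br b a - (1/2) * br a a + t * C ≤ r :=
          le_of_mul_le_mul_left h2' ht0
        have htC : t * |C| ≤ ε := by
          have h1 : t * |C| ≤ t * (|C| + 1) := by nlinarith [abs_nonneg C, ht0.le]
          have h2'' : t ≤ ε / (|C| + 1) := min_le_right _ _
          have : t * (|C| + 1) ≤ (ε / (|C| + 1)) * (|C| + 1) := by nlinarith [abs_nonneg C]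
          rw [div_mul_cancel₀ _ (ne_of_gt habs)] at this
          linarith
        have hnegC : -(t * |C|) ≤ t * C := by nlinarith [neg_abs_le C, ht0.le]
        simp only [qForm]
        clear_value t C
        linarith
      calc ((br b a : ℝ) : EReal) - f b = ((br b a - r : ℝ) : EReal) := by
            rw [← hr]; norm_cast
        _ ≤ ((qForm br a : ℝ) : EReal) := by exact_mod_cast (by linarith : br b a - r ≤ qForm br a)
  · -- lower bound: take b = a
    have hterm : ((qForm br a : ℝ) : EReal) = ((br a a : ℝ) : EReal) - f a := by
      rw [ha]
      have : ((br a a : ℝ) : EReal) - ((qForm br a : ℝ) : EReal)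
          = ((br a a - qForm br a : ℝ) : EReal) := by norm_cast
      rw [this]
      congr 1
      simp only [qForm]; ring
    rw [hterm]
    exact le_iSup (fun b => ((br b a : ℝ) : EReal) - f b) a
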